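/- For any smooth manifold M, the projection p : DC_1^2(M) → C_ℤ^2(M), p(c, h, ω) = c, induces an isomorphism on second cohomology: H^2(DC_1^•(M)) ≅ H^2(M, ℤ) (smooth singular cohomology with integer coefficients). -/

import Mathlib

open Manifold Finset
noncomputable section

/-- The `i`-th face embedding of the standard `n`-simplex into the standard `n+1`-simplex,
as a linear map (insertion of `0` at the `i`-th vertex coordinate). -/
def faceLM (n : ℕ) (i : Fin (n + 2)) : (Fin (n + 1) → ℝ) →ₗ[ℝ] (Fin (n + 2) → ℝ) where
  toFun x j := ∑ k, if i.succAbove k = j then x k else 0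
  map_add' x y := by
    funext j
    show (∑ k, if i.succAbove k = j then (x k + y k) else 0) =
      (∑ k, if i.succAbove k = j then x k else 0) + (∑ k, if i.succAbove k = j then y k else 0)
    rw [← Finset.sum_add_distrib]
    exact Finset.sum_congr rfl fun k _ => by split <;> simp
  map_smul' c x := by
    funext j
    show (∑ k, if i.succAbove k = j then (c * x k) else 0) =
      c * ∑ k, if i.succAbove k = j then x k else 0
    rw [Finset.mul_sum]
    exact Finset.sum_congr rfl fun k _ => by split <;> simp

lemma faceLM_apply (n : ℕ) (i : Fin (n + 2)) (x : Fin (n + 1) → ℝ) (j : Fin (n + 2)) :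
    faceLM n i x j = ∑ k, if i.succAbove k = j then x k else 0 := rfl

lemma faceLM_mapsTo (n : ℕ) (i : Fin (n + 2)) :
    Set.MapsTo (faceLM n i) (stdSimplex ℝ (Fin (n + 1))) (stdSimplex ℝ (Fin (n + 2))) := by
  intro x hx
  obtain ⟨hx0, hx1⟩ := hx
  constructor
  · intro j
    rw [faceLM_apply]
    refine Finset.sum_nonneg fun k _ => ?_
    split
    · exact hx0 k
    · exact le_refl 0
  · calc ∑ j, faceLM n i x j
        = ∑ j, ∑ k, (if i.succAbove k = j then x k else 0) :=
          Finset.sum_congr rfl fun j _ => faceLM_apply n i x j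
      _ = ∑ k, ∑ j, (if i.succAbove k = j then x k else 0) := Finset.sum_comm
      _ = ∑ k, x k := Finset.sum_congr rfl fun k _ => by simp [Finset.sum_ite_eq]
      _ = 1 := hx1

variable {E : Type} [NormedAddCommGroup E] [NormedSpace ℝ E]
  {H : Type} [TopologicalSpace H] (I : ModelWithCorners ℝ E H)
  (M : Type) [TopologicalSpace M] [ChartedSpace H M]

/-- A smooth singular `n`-simplex in a manifold `M`. -/
structure SSimplex (n : ℕ) where
  toFun : (Fin (n + 1) → ℝ) → M
  smooth : ContMDiffOn 𝓘(ℝ, Fin (n + 1) → ℝ) I (⊤ : ℕ∞) toFun (stdSimplex ℝ (Fin (n + 1)))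

variable {I M}

/-- The `i`-th face of a smooth singular simplex. -/
def SSimplex.face {n : ℕ} (σ : SSimplex I M (n + 1)) (i : Fin (n + 2)) : SSimplex I M n where
  toFun := σ.toFun ∘ (faceLM n i)
  smooth := by
    have h1 : ContMDiff 𝓘(ℝ, Fin (n+1) → ℝ) 𝓘(ℝ, Fin (n+2) → ℝ) (⊤ : ℕ∞) ⇑(faceLM n i) := by
      rw [← LinearMap.coe_toContinuousLinearMap' (faceLM n i)]
      exact (ContinuousLinearMap.contDiff _).contMDiff
    exact σ.smooth.comp h1.contMDiffOn (faceLM_mapsTo n i)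

variable (I M)

/-- Smooth singular chains. -/
def SChain (n : ℕ) : Type := FreeAbelianGroup (SSimplex I M n)

instance (n : ℕ) : AddCommGroup (SChain I M n) :=
  inferInstanceAs (AddCommGroup (FreeAbelianGroup (SSimplex I M n)))

/-- The boundary operator on smooth singular chains. -/
def sbd (n : ℕ) : SChain I M (n + 1) →+ SChain I M n :=
  ∑ i : Fin (n + 2), (-1 : ℤ) ^ (i : ℕ) • FreeAbelianGroup.map (fun σ => σ.face i)

variable (R : Type) [AddCommGroup R]

/-- Smooth singular cochains with coefficients in `R`. -/
def SCochain (n : ℕ) : Type := SSimplex I M n → R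

instance (n : ℕ) : AddCommGroup (SCochain I M R n) :=
  inferInstanceAs (AddCommGroup (SSimplex I M n → R))

/-- The coboundary on smooth singular cochains. -/
def scd (n : ℕ) : SCochain I M R n →+ SCochain I M R (n + 1) :=
  AddMonoidHom.mk' (fun c σ => ∑ i : Fin (n + 2), (-1 : ℤ) ^ (i : ℕ) • c (σ.face i))
    (by
      intro c c'
      funext σ
      show ∑ i : Fin (n + 2), (-1 : ℤ) ^ (i : ℕ) • (c (σ.face i) + c' (σ.face i)) =
        (∑ i : Fin (n + 2), (-1 : ℤ) ^ (i : ℕ) • c (σ.face i)) +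
          ∑ i : Fin (n + 2), (-1 : ℤ) ^ (i : ℕ) • c' (σ.face i)
      simp [smul_add, Finset.sum_add_distrib])

/-- Pairing of a cochain with a chain (evaluation / integration). -/
def pairC {n : ℕ} (c : SCochain I M R n) : SChain I M n →+ R :=
  FreeAbelianGroup.lift c

lemma pairC_add {n : ℕ} (c c' : SCochain I M R n) (x : SChain I M n) :
    pairC I M R (c + c') x = pairC I M R c x + pairC I M R c' x := by
  revert x
  show ∀ x : FreeAbelianGroup (SSimplex I M n),
    FreeAbelianGroup.lift (c + c') x = FreeAbelianGroup.lift c x + FreeAbelianGroup.lift c' x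
  intro x
  induction x using FreeAbelianGroup.induction_on with
  | zero => simp
  | of σ =>
    exact (FreeAbelianGroup.lift_apply_of (f := c + c') σ).trans
      (congrArg₂ (· + ·) (FreeAbelianGroup.lift_apply_of (f := c) σ).symm
        (FreeAbelianGroup.lift_apply_of (f := c') σ).symm)
  | neg y hy => simp only [map_neg, hy]; abel
  | add y z hy hz => simp only [map_add, hy, hz]; abel

/-- The coefficient map `ℤ → ℝ` on cochains. -/
def intToReal (n : ℕ) : SCochain I M ℤ n →+ SCochain I M ℝ n :=
  AddMonoidHom.mk' (fun c σ => ((c σ : ℤ) : ℝ))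
    (by
      intro c c'
      funext σ
      show ((c σ + c' σ : ℤ) : ℝ) = ((c σ : ℤ) : ℝ) + ((c' σ : ℤ) : ℝ)
      push_cast
      ring)

/-- Degree `n-1` part (with the convention that it is trivial for `n = 0`):
this hosts the middle ("real cochain") component of the Hopkins–Singer complex. -/
def hCompT : ℕ → Type
  | 0 => PUnit
  | (m + 1) => SCochain I M ℝ m

instance : ∀ n, AddCommGroup (hCompT I M n)
  | 0 => inferInstanceAs (AddCommGroup PUnit)
  | (m + 1) => inferInstanceAs (AddCommGroup (SCochain I M ℝ m))

/-- Differential from the `(n-1)`-st level into degree `n`. -/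
def hd : ∀ n, hCompT I M n →+ SCochain I M ℝ n
  | 0 => 0
  | (m + 1) => scd I M ℝ m

variable (Ω : ∀ n : ℕ, AddSubgroup (SCochain I M ℝ n))

/-- The Hopkins–Singer group `DC_s^n(M)`: triples `(c, h, ω)` of an integral `n`-cochain,
a real `(n-1)`-cochain and a differential form `ω` (an element of the de Rham subcomplex
`Ω ⊆ C^•_ℝ`, forms being viewed as real cochains by integration), where `ω = 0` if `n < s`. -/
def DCgrp (s n : ℕ) :
    AddSubgroup (SCochain I M ℤ n × hCompT I M n × SCochain I M ℝ n) where
  carrier := {x | x.2.2 ∈ Ω n ∧ (n < s → x.2.2 = 0)}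
  zero_mem' := ⟨(Ω n).zero_mem, fun _ => rfl⟩
  add_mem' := by
    rintro a b ⟨ha, ha'⟩ ⟨hb, hb'⟩
    exact ⟨(Ω n).add_mem ha hb, fun h => by
      show a.2.2 + b.2.2 = 0
      rw [ha' h, hb' h, add_zero]⟩
  neg_mem' := by
    rintro a ⟨ha, ha'⟩
    refine ⟨(Ω n).neg_mem ha, fun h => ?_⟩
    show -a.2.2 = 0
    rw [ha' h, neg_zero]

/-- The Hopkins–Singer differential `d(c,h,ω) = (dc, ω - c - dh, dω)`. -/
def dDC (hΩ : ∀ n x, x ∈ Ω n → scd I M ℝ n x ∈ Ω (n + 1)) (s n : ℕ) :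
    (DCgrp I M Ω s n) →+ (DCgrp I M Ω s (n + 1)) :=
  AddMonoidHom.mk'
    (fun x => ⟨(scd I M ℤ n x.1.1,
        x.1.2.2 - intToReal I M n x.1.1 - hd I M n x.1.2.1,
        scd I M ℝ n x.1.2.2),
      ⟨hΩ n _ x.2.1, fun h => by
        rw [x.2.2 (Nat.lt_of_succ_lt h)]; exact map_zero _⟩⟩)
    (by
      intro x y
      apply Subtype.ext
      simp only [AddSubgroup.coe_add, Prod.fst_add, Prod.snd_add, map_add, Prod.mk_add_mk,
        Prod.mk.injEq]
      refine ⟨trivial, Prod.ext ?_ ?_⟩ <;> (try simp only [Prod.fst_add, Prod.snd_add]) <;> abel)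

/-- Cohomology at the middle spot of a two-step complex `A → B → C`. -/
def Hq {A B C : Type*} [AddCommGroup A] [AddCommGroup B] [AddCommGroup C]
    (f : A →+ B) (g : B →+ C) : Type _ :=
  g.ker ⧸ ((f.range).addSubgroupOf g.ker)

instance {A B C : Type*} [AddCommGroup A] [AddCommGroup B] [AddCommGroup C]
    (f : A →+ B) (g : B →+ C) : AddCommGroup (Hq f g) :=
  inferInstanceAs (AddCommGroup (_ ⧸ _))

/-- Class of a cocycle in `Hq`. -/
def HqMk {A B C : Type*} [AddCommGroup A] [AddCommGroup B] [AddCommGroup C]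
    (f : A →+ B) (g : B →+ C) (b : B) (hb : b ∈ g.ker) : Hq f g :=
  QuotientAddGroup.mk (⟨b, hb⟩ : g.ker)

/-- Cycles (with the convention `Z_0 = C_0`, everything). -/
def Zcyc : ∀ n : ℕ, AddSubgroup (SChain I M n)
  | 0 => ⊤
  | (m + 1) => (sbd I M m).ker


-- auxiliary lemmas
section Aux
variable {E : Type} [NormedAddCommGroup E] [NormedSpace ℝ E]
  {H : Type} [TopologicalSpace H] {I : ModelWithCorners ℝ E H}
  {M : Type} [TopologicalSpace M] [ChartedSpace H M]

lemma SSimplex.ext' {n : ℕ} {σ τ : SSimplex I M n} (h : σ.toFun = τ.toFun) : σ = τ := by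
  cases σ; cases τ; simp_all

lemma scd_apply {R : Type} [AddCommGroup R] {n : ℕ} (c : SCochain I M R n)
    (σ : SSimplex I M (n + 1)) :
    scd I M R n c σ = ∑ i : Fin (n + 2), (-1 : ℤ) ^ (i : ℕ) • c (σ.face i) := rfl

lemma scd_intToReal (n : ℕ) (c : SCochain I M ℤ n) :
    scd I M ℝ n (intToReal I M n c) = intToReal I M (n + 1) (scd I M ℤ n c) := by
  funext σ
  show ∑ i : Fin (n + 2), (-1 : ℤ) ^ (i : ℕ) • ((c (σ.face i) : ℤ) : ℝ) =
    ((∑ i : Fin (n + 2), (-1 : ℤ) ^ (i : ℕ) • c (σ.face i) : ℤ) : ℝ)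
  rw [Int.cast_sum]
  exact Finset.sum_congr rfl fun i _ => by simp [zsmul_eq_mul]

lemma faceLM_faceLM (n : ℕ) (i : Fin (n + 3)) (j : Fin (n + 2)) (x : Fin (n + 1) → ℝ)
    (m : Fin (n + 3)) :
    faceLM (n + 1) i (faceLM n j x) m =
      ∑ k, if i.succAbove (j.succAbove k) = m then x k else 0 := by
  rw [faceLM_apply]
  have : ∀ k' : Fin (n + 2), (if i.succAbove k' = m then faceLM n j x k' else 0) =
      ∑ k, if j.succAbove k = k' then (if i.succAbove k' = m then x k else 0) else 0 := by
    intro k'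
    rw [faceLM_apply]
    split
    · rfl
    · simp
  rw [Finset.sum_congr rfl fun k' _ => this k', Finset.sum_comm]
  refine Finset.sum_congr rfl fun k _ => ?_
  simp [Finset.sum_ite_eq]

lemma face_face {n : ℕ} (σ : SSimplex I M (n + 2)) (i i' : Fin (n + 3)) (j j' : Fin (n + 2))
    (h : ∀ k : Fin (n + 1), i.succAbove (j.succAbove k) = i'.succAbove (j'.succAbove k)) :
    (σ.face i).face j = (σ.face i').face j' := by
  apply SSimplex.ext'
  funext x
  show σ.toFun (faceLM (n+1) i (faceLM n j x)) = σ.toFun (faceLM (n+1) i' (faceLM n j' x))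
  congr 1
  funext m
  rw [faceLM_faceLM, faceLM_faceLM]
  exact Finset.sum_congr rfl fun k _ => by rw [h k]

end Aux
section Aux2
variable {E : Type} [NormedAddCommGroup E] [NormedSpace ℝ E]
  {H : Type} [TopologicalSpace H] {I : ModelWithCorners ℝ E H}
  {M : Type} [TopologicalSpace M] [ChartedSpace H M]

lemma scd_scd_0 (b : SCochain I M ℝ 0) : scd I M ℝ 1 (scd I M ℝ 0 b) = 0 := by
  funext σ
  have e1 : (σ.face 0).face 0 = (σ.face 1).face 0 := face_face σ _ _ _ _ (by decide)
  have e2 : (σ.face 0).face 1 = (σ.face 2).face 0 := face_face σ _ _ _ _ (by decide)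
  have e3 : (σ.face 1).face 1 = (σ.face 2).face 1 := face_face σ _ _ _ _ (by decide)
  show ∑ i : Fin 3, (-1:ℤ)^(i:ℕ) • (scd I M ℝ 0 b) (σ.face i) = 0
  simp [scd_apply, Fin.sum_univ_three, Fin.sum_univ_two, e1, e2, e3]
  ring_nf

lemma scd_scd_1 (b : SCochain I M ℝ 1) : scd I M ℝ 2 (scd I M ℝ 1 b) = 0 := by
  funext σ
  have e1 : (σ.face 0).face 0 = (σ.face 1).face 0 := face_face σ _ _ _ _ (by decide)
  have e2 : (σ.face 0).face 1 = (σ.face 2).face 0 := face_face σ _ _ _ _ (by decide)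
  have e3 : (σ.face 0).face 2 = (σ.face 3).face 0 := face_face σ _ _ _ _ (by decide)
  have e4 : (σ.face 1).face 1 = (σ.face 2).face 1 := face_face σ _ _ _ _ (by decide)
  have e5 : (σ.face 1).face 2 = (σ.face 3).face 1 := face_face σ _ _ _ _ (by decide)
  have e6 : (σ.face 2).face 2 = (σ.face 3).face 2 := face_face σ _ _ _ _ (by decide)
  show ∑ i : Fin 4, (-1:ℤ)^(i:ℕ) • (scd I M ℝ 1 b) (σ.face i) = 0
  simp [scd_apply, Fin.sum_univ_four, Fin.sum_univ_three, e1, e2, e3, e4, e5, e6, show ((3:Fin 4):ℕ) = 3 from rfl]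
  ring_nf

end Aux2

section Aux3
variable {E : Type} [NormedAddCommGroup E] [NormedSpace ℝ E]
  {H : Type} [TopologicalSpace H] {I : ModelWithCorners ℝ E H}
  {M : Type} [TopologicalSpace M] [ChartedSpace H M]

def toCochain {n : ℕ} (h : hCompT I M (n + 1)) : SCochain I M ℝ n := h

end Aux3

/-- For any smooth manifold `M`, the projection
`p : DC_1^2(M) → C_ℤ^2(M)`, `p(c, h, ω) = c`, induces an isomorphism on second cohomology:
`H^2(DC_1^•(M)) ≅ H^2(M, ℤ)` (smooth singular cohomology with integer coefficients).
The de Rham complex is encoded as a `d`-stable subcomplex `Ω` of real smooth singular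
cochains (forms viewed as cochains via integration), satisfying the de Rham theorem:
any real cochain `a` whose coboundary is a differential form equals `α + d b` for some
form `α` and real cochain `b` (in degree `0`, `a` itself is a form). -/
theorem stmt10
    {E : Type} [NormedAddCommGroup E] [NormedSpace ℝ E]
    {H : Type} [TopologicalSpace H] (I : ModelWithCorners ℝ E H)
    (M : Type) [TopologicalSpace M] [ChartedSpace H M] [IsManifold I (⊤ : ℕ∞) M]
    (Ω : ∀ n : ℕ, AddSubgroup (SCochain I M ℝ n))
    (hΩ : ∀ n x, x ∈ Ω n → scd I M ℝ n x ∈ Ω (n + 1))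
    (hDeRham : ∀ (n : ℕ) (a : SCochain I M ℝ (n + 1)),
      scd I M ℝ (n + 1) a ∈ Ω (n + 2) →
        ∃ α ∈ Ω (n + 1), ∃ b : SCochain I M ℝ n, a = α + scd I M ℝ n b)
    (hDeRham0 : ∀ a : SCochain I M ℝ 0, scd I M ℝ 0 a ∈ Ω 1 → a ∈ Ω 0) :
    ∃ e : Hq (dDC I M Ω hΩ 1 1) (dDC I M Ω hΩ 1 2) ≃+ Hq (scd I M ℤ 1) (scd I M ℤ 2),
      ∀ (x : DCgrp I M Ω 1 2) (hx : x ∈ (dDC I M Ω hΩ 1 2).ker)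
        (hx' : x.1.1 ∈ (scd I M ℤ 2).ker),
        e (HqMk _ _ x hx) = HqMk _ _ x.1.1 hx' := by
  classical
  set d1 := dDC I M Ω hΩ 1 1 with hd1def
  set d2 := dDC I M Ω hΩ 1 2 with hd2def
  set s1 := scd I M ℤ 1 with hs1def
  set s2 := scd I M ℤ 2 with hs2def
  -- first component of an element of ker d2 is an s2-cocycle
  have kerfst : ∀ x : d2.ker, x.1.1.1 ∈ s2.ker := by
    rintro ⟨x, hx⟩
    have h0 : (d2 x : SCochain I M ℤ 3 × hCompT I M 3 × SCochain I M ℝ 3) = 0 :=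
      congrArg Subtype.val hx
    exact congrArg Prod.fst h0
  -- the cochain-level map
  have φadd : ∀ x y : d2.ker,
      HqMk s1 s2 ((x + y).1.1.1) (kerfst (x + y)) =
        HqMk s1 s2 (x.1.1.1) (kerfst x) + HqMk s1 s2 (y.1.1.1) (kerfst y) := by
    intro x y
    rfl
  set φ : d2.ker →+ Hq s1 s2 :=
    AddMonoidHom.mk' (fun x => HqMk s1 s2 x.1.1.1 (kerfst x)) φadd with hφdef
  have hker : ∀ x ∈ (d1.range).addSubgroupOf d2.ker, φ x = 0 := by
    rintro x hx
    obtain ⟨y, hy⟩ := (AddSubgroup.mem_addSubgroupOf).1 hx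
    refine (QuotientAddGroup.eq_zero_iff _).2 ?_
    refine (AddSubgroup.mem_addSubgroupOf).2 ⟨y.1.1, ?_⟩
    have h0 : (d1 y : SCochain I M ℤ 2 × hCompT I M 2 × SCochain I M ℝ 2) = (x : DCgrp I M Ω 1 2).1 :=
      congrArg Subtype.val hy
    exact congrArg Prod.fst h0
  set φbar : Hq d1 d2 →+ Hq s1 s2 := QuotientAddGroup.lift _ φ hker with hφbar
  have hinj : Function.Injective φbar := by
    refine (injective_iff_map_eq_zero _).2 fun q hq => ?_
    induction q using QuotientAddGroup.induction_on with
    | H x =>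
      have hx1 : x.1.1.1 ∈ s1.range := by
        have := (QuotientAddGroup.eq_zero_iff _).1 hq
        exact (AddSubgroup.mem_addSubgroupOf).1 this
      obtain ⟨c', hc'⟩ := hx1
      -- components of x
      have h0 : (d2 x.1 : SCochain I M ℤ 3 × hCompT I M 3 × SCochain I M ℝ 3) = 0 :=
        congrArg Subtype.val x.2
      have hmid : (x.1.1.2.2 : SCochain I M ℝ 2)
          - intToReal I M 2 x.1.1.1 - scd I M ℝ 1 (toCochain x.1.1.2.1) = 0 :=
        congrArg (fun p => p.2.1) h0
      set a : SCochain I M ℝ 1 := toCochain x.1.1.2.1 + intToReal I M 1 c' with hadef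
      have ha : scd I M ℝ 1 a = x.1.1.2.2 := by
        rw [hadef, map_add, scd_intToReal, hc']
        have h2 := sub_eq_zero.1 hmid
        rw [← h2]
        show (x.1.1.2.2 : SCochain I M ℝ 2) - intToReal I M 2 x.1.1.1 + intToReal I M 2 x.1.1.1
          = x.1.1.2.2
        abel
      have hΩa : scd I M ℝ 1 a ∈ Ω 2 := by rw [ha]; exact x.1.2.1
      obtain ⟨α, hα, b, hab⟩ := hDeRham 0 a hΩa
      set y : DCgrp I M Ω 1 1 :=
        ⟨(c', (-b : hCompT I M 1), α), ⟨hα, fun hlt => absurd hlt (lt_irrefl 1)⟩⟩ with hydef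
      have hy : d1 y = (x : DCgrp I M Ω 1 2) := by
        apply Subtype.ext
        have hα' : α = a - scd I M ℝ 0 b := by rw [hab]; abel
        refine Prod.ext hc' (Prod.ext ?_ ?_)
        · show α - intToReal I M 1 c' - scd I M ℝ 0 (-b) = toCochain x.1.1.2.1
          rw [map_neg, hα', hadef]
          abel
        · show scd I M ℝ 1 α = x.1.1.2.2
          rw [hα', map_sub, scd_scd_0, ha, sub_zero]
      refine (QuotientAddGroup.eq_zero_iff _).2 ?_
      exact (AddSubgroup.mem_addSubgroupOf).2 ⟨y, hy⟩
  have hsurj : Function.Surjective φbar := by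
    intro q
    induction q using QuotientAddGroup.induction_on with
    | H z =>
      have hc : s2 z.1 = 0 := z.2
      have hΩc : scd I M ℝ 2 (intToReal I M 2 z.1) ∈ Ω 3 := by
        rw [scd_intToReal, hc, map_zero]
        exact (Ω 3).zero_mem
      obtain ⟨α, hα, b, hab⟩ := hDeRham 1 (intToReal I M 2 z.1) hΩc
      set X : DCgrp I M Ω 1 2 :=
        ⟨(z.1, (-b : hCompT I M 2), α), ⟨hα, fun hlt => absurd hlt (by norm_num)⟩⟩ with hXdef
      have hα' : α = intToReal I M 2 z.1 - scd I M ℝ 1 b := by rw [hab]; abel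
      have hX : X ∈ d2.ker := by
        apply Subtype.ext
        refine Prod.ext hc (Prod.ext ?_ ?_)
        · show α - intToReal I M 2 z.1 - scd I M ℝ 1 (-b) = 0
          rw [map_neg, hα']; abel
        · show scd I M ℝ 2 α = 0
          rw [hα', map_sub, scd_scd_1, scd_intToReal, hc, map_zero, sub_zero]
      refine ⟨QuotientAddGroup.mk (⟨X, hX⟩ : d2.ker), ?_⟩
      show HqMk s1 s2 z.1 (kerfst ⟨X, hX⟩) = QuotientAddGroup.mk z
      exact congrArg QuotientAddGroup.mk (Subtype.ext rfl)
  refine ⟨AddEquiv.ofBijective φbar ⟨hinj, hsurj⟩, ?_⟩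
  intro x hx hx'
  rfl

end
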